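/- arXiv:0807.0592 — 2 statements merged into one kernel-verified Lean document; each statement's English description precedes it below -/
import Mathlib

section
/- Let q be a prime power and d ≥ 2. If E ⊆ F_q^d satisfies |E| ≥ C q^{d(k-1)/k + (k-1)/2 + 1/k} for a sufficiently large constant C, where 0 < k(k-1)/2 < d, then the number λ_k of k-tuples (x^1,...,x^k) ∈ E^k with x^i · x^j = 0 for all 1 ≤ i < j ≤ k equals (1+o(1)) |E|^k q^{-k(k-1)/2}. -/
set_option maxHeartbeats 1000000
set_option linter.unusedSectionVars false

open Finset

/-- The number of `k`-tuples of mutually orthogonal vectors of `E`. -/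
noncomputable def orthoTuples {F : Type} [Field F] [Fintype F] {d : ℕ}
    (E : Finset (Fin d → F)) (k : ℕ) : ℕ :=
  Nat.card {x : Fin k → (Fin d → F) //
    (∀ i, x i ∈ E) ∧ ∀ i j : Fin k, i < j → ∑ m, x i m * x j m = 0}

namespace OrthoProofAux

variable {F : Type} [Field F] [Fintype F] [DecidableEq F] {d : ℕ}

/-- dot product -/
def dot {d : ℕ} (x y : Fin d → F) : F := ∑ m, x m * y m

/-- the set of mutually orthogonal `k`-tuples from `E` -/
def tset (E : Finset (Fin d → F)) (k : ℕ) : Finset (Fin k → Fin d → F) :=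
  univ.filter fun x => (∀ i, x i ∈ E) ∧ ∀ i j : Fin k, i < j → dot (x i) (x j) = 0

lemma orthoTuples_eq (E : Finset (Fin d → F)) (k : ℕ) :
    orthoTuples E k = (tset E k).card := by
  rw [orthoTuples, Nat.card_eq_fintype_card, Fintype.card_subtype]
  congr 1

lemma tset_one_card (E : Finset (Fin d → F)) : (tset E 1).card = E.card := by
  refine Finset.card_bij' (fun x _ => x 0) (fun y _ => fun _ => y) ?_ ?_ ?_ ?_
  · intro x hx
    simp only [tset, mem_filter, mem_univ, true_and] at hx
    exact hx.1 0
  · intro y hy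
    simp only [tset, mem_filter, mem_univ, true_and]
    exact ⟨fun i => by simpa using hy,
      fun i j hij => by simp [Subsingleton.elim i j] at hij⟩
  · intro x _
    funext i
    exact congrArg x (Subsingleton.elim 0 i)
  · intro y _
    rfl

/-- number of extensions -/
def ncount (E : Finset (Fin d → F)) {j : ℕ} (v : Fin j → Fin d → F) : ℕ :=
  (E.filter fun y => ∀ i, dot (v i) y = 0).card

lemma tset_succ_card (E : Finset (Fin d → F)) (j : ℕ) :
    (tset E (j + 1)).card = ∑ v ∈ tset E j, ncount E v := by
  have hmap : ∀ x ∈ tset E (j + 1), Fin.init x ∈ tset E j := by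
    intro x hx
    simp only [tset, mem_filter, mem_univ, true_and] at hx ⊢
    refine ⟨fun i => hx.1 _, fun i j' hij => hx.2 _ _ ?_⟩
    simpa [Fin.castSucc_lt_castSucc_iff] using hij
  rw [Finset.card_eq_sum_card_fiberwise hmap]
  refine Finset.sum_congr rfl fun v hv => ?_
  simp only [tset, mem_filter, mem_univ, true_and] at hv
  refine Finset.card_bij' (fun x _ => x (Fin.last j)) (fun y _ => Fin.snoc v y) ?_ ?_ ?_ ?_
  · intro x hx
    simp only [mem_filter, tset, mem_univ, true_and] at hx
    obtain ⟨⟨hx1, hx2⟩, hx3⟩ := hx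
    simp only [ncount, mem_filter]
    refine ⟨hx1 _, fun i => ?_⟩
    have h := hx2 (Fin.castSucc i) (Fin.last j) (Fin.castSucc_lt_last i)
    have hvi : v i = x (Fin.castSucc i) := by rw [← hx3]; rfl
    rw [hvi]; exact h
  · intro y hy
    simp only [ncount, mem_filter] at hy
    simp only [mem_filter, tset, mem_univ, true_and]
    refine ⟨⟨fun i => ?_, fun i j' => ?_⟩, ?_⟩
    · refine Fin.lastCases ?_ ?_ i
      · simpa using hy.1
      · intro i'
        simpa using hv.1 i'
    · refine Fin.lastCases ?_ ?_ j'
      · refine Fin.lastCases ?_ ?_ i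
        · intro h; exact absurd h (lt_irrefl _)
        · intro i' _
          simp only [Fin.snoc_castSucc, Fin.snoc_last]
          exact hy.2 i'
      · intro j''
        refine Fin.lastCases ?_ ?_ i
        · intro h
          exact absurd h (asymm (Fin.castSucc_lt_last j''))
        · intro i' hii'
          have hlt : i' < j'' := by simpa [Fin.castSucc_lt_castSucc_iff] using hii'
          simp only [Fin.snoc_castSucc]
          exact hv.2 i' j'' hlt
    · simp
  · intro x hx
    simp only [mem_filter] at hx
    obtain ⟨-, hx2⟩ := hx
    subst hx2
    exact Fin.snoc_init_self x
  · intro y _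
    simp

section Char

variable (ψ : AddChar F ℂ)

lemma map_sum' {ι : Type} (s : Finset ι) (f : ι → F) :
    ψ (∑ i ∈ s, f i) = ∏ i ∈ s, ψ (f i) := by
  classical
  induction s using Finset.cons_induction with
  | empty => simp
  | cons a s ha ih => rw [Finset.sum_cons, Finset.prod_cons, AddChar.map_add_eq_mul, ih]

lemma psi_sum_vec {ι : Type} [Fintype ι] [DecidableEq ι] (hψ : ψ.IsPrimitive) (w : ι → F) :
    ∑ t : ι → F, ψ (∑ i, t i * w i)
      = if w = 0 then ((Fintype.card F : ℂ)) ^ (Fintype.card ι) else 0 := by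
  have h1 : ∑ t : ι → F, ψ (∑ i, t i * w i)
      = ∑ t ∈ Fintype.piFinset (fun _ : ι => (univ : Finset F)), ∏ i, ψ (t i * w i) := by
    rw [Fintype.piFinset_univ]
    exact Finset.sum_congr rfl fun t _ => map_sum' ψ _ _
  rw [h1, Finset.sum_prod_piFinset (univ : Finset F) (fun i a => ψ (a * w i))]
  have h2 : ∀ i : ι, ∑ s : F, ψ (s * w i) = if w i = 0 then (Fintype.card F : ℂ) else 0 := by
    intro i
    rw [AddChar.sum_mulShift (w i) hψ]
    split_ifs <;> simp
  rw [Finset.prod_congr rfl fun i _ => h2 i]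
  by_cases hw : w = 0
  · simp [hw, Finset.prod_const, Finset.card_univ]
  · obtain ⟨i0, hi0⟩ := Function.ne_iff.mp hw
    have hi0' : w i0 ≠ 0 := by simpa using hi0
    rw [if_neg hw]
    exact Finset.prod_eq_zero (Finset.mem_univ i0) (if_neg hi0')

/-- exponential sum over `E` -/
noncomputable def eE (E : Finset (Fin d → F)) (z : Fin d → F) : ℂ := ∑ y ∈ E, ψ (dot y z)

lemma eE_zero (E : Finset (Fin d → F)) : eE ψ E 0 = (E.card : ℂ) := by
  simp [eE, dot]

lemma dot_lin {j : ℕ} (y : Fin d → F) (t : Fin j → F) (v : Fin j → Fin d → F) :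
    dot y (∑ i, t i • v i) = ∑ i, t i * dot (v i) y := by
  unfold dot
  calc ∑ m, y m * (∑ i, t i • v i) m
      = ∑ m, ∑ i, y m * (t i * v i m) := by
        refine Finset.sum_congr rfl fun m _ => ?_
        rw [Finset.sum_apply, Finset.mul_sum]
        exact Finset.sum_congr rfl fun i _ => by simp [smul_eq_mul]
    _ = ∑ i, ∑ m, y m * (t i * v i m) := Finset.sum_comm
    _ = ∑ i, t i * ∑ m, v i m * y m := by
        refine Finset.sum_congr rfl fun i _ => ?_
        rw [Finset.mul_sum]
        exact Finset.sum_congr rfl fun m _ => by ring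

lemma completion (E : Finset (Fin d → F)) (hψ : ψ.IsPrimitive) {j : ℕ}
    (v : Fin j → Fin d → F) :
    ∑ t : Fin j → F, eE ψ E (∑ i, t i • v i)
      = (Fintype.card F : ℂ) ^ j * (ncount E v : ℂ) := by
  unfold eE
  rw [Finset.sum_comm]
  have h1 : ∀ y, ∑ t : Fin j → F, ψ (dot y (∑ i, t i • v i))
      = if (∀ i, dot (v i) y = 0) then ((Fintype.card F : ℂ)) ^ j else 0 := by
    intro y
    have h := psi_sum_vec ψ hψ (fun i => dot (v i) y)
    simp only [Fintype.card_fin] at h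
    rw [Finset.sum_congr rfl fun t _ => by rw [dot_lin], h]
    exact if_congr (by simp [funext_iff]) rfl rfl
  rw [Finset.sum_congr rfl fun y _ => h1 y]
  rw [Finset.sum_ite, Finset.sum_const_zero, add_zero, Finset.sum_const, nsmul_eq_mul]
  rw [mul_comm]
  rfl

/-- the error sum -/
noncomputable def gsum (E : Finset (Fin d → F)) {j : ℕ} (v : Fin j → Fin d → F) : ℂ :=
  ∑ t ∈ (univ \ {(0 : Fin j → F)}), eE ψ E (∑ i, t i • v i)

lemma master (E : Finset (Fin d → F)) (hψ : ψ.IsPrimitive) (j : ℕ) :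
    ((Fintype.card F : ℂ)) ^ j * ((tset E (j + 1)).card : ℂ)
      = ((tset E j).card : ℂ) * (E.card : ℂ) + ∑ v ∈ tset E j, gsum ψ E v := by
  have h1 : ((tset E (j+1)).card : ℂ) = ∑ v ∈ tset E j, (ncount E v : ℂ) := by
    rw [tset_succ_card]; push_cast; rfl
  rw [h1, Finset.mul_sum]
  rw [Finset.sum_congr rfl fun v _ => (completion ψ E hψ v).symm]
  have h2 : ∀ v : Fin j → Fin d → F,
      ∑ t : Fin j → F, eE ψ E (∑ i, t i • v i)
        = gsum ψ E v + (E.card : ℂ) := by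
    intro v
    rw [Finset.sum_eq_sum_sdiff_singleton_add (Finset.mem_univ (0 : Fin j → F))]
    congr 1
    rw [show ∑ i, (0 : Fin j → F) i • v i = 0 by simp]
    exact eE_zero ψ E
  rw [Finset.sum_congr rfl fun v _ => h2 v, Finset.sum_add_distrib, Finset.sum_const,
    nsmul_eq_mul, add_comm]

lemma psi_sum_vec2 (hψ : ψ.IsPrimitive) {j : ℕ} (u : Fin j → Fin d → F) :
    ∑ v : Fin j → Fin d → F, ψ (∑ i, ∑ m, v i m * u i m)
      = if u = 0 then (Fintype.card F : ℂ) ^ (j * d) else 0 := by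
  have key := psi_sum_vec ψ hψ (fun p : Fin j × Fin d => u p.1 p.2)
  rw [← Equiv.sum_comp (Equiv.curry (Fin j) (Fin d) F)
    (fun v : Fin j → Fin d → F => ψ (∑ i, ∑ m, v i m * u i m))]
  have h1 : ∀ w : Fin j × Fin d → F,
      ∑ i, ∑ m, (Equiv.curry (Fin j) (Fin d) F w) i m * u i m
        = ∑ p : Fin j × Fin d, w p * u p.1 p.2 := by
    intro w
    rw [Fintype.sum_prod_type]
    rfl
  rw [Finset.sum_congr rfl fun w _ => by rw [h1 w]]
  rw [key]
  have hcard : Fintype.card (Fin j × Fin d) = j * d := by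
    simp [Fintype.card_prod]
  rw [hcard]
  refine if_congr ?_ rfl rfl
  constructor
  · intro h
    funext i m
    exact congrFun h (i, m)
  · intro h
    subst h
    rfl

lemma inner_L2 (E : Finset (Fin d → F)) (hψ : ψ.IsPrimitive) (hp : 0 < ringChar F)
    {j : ℕ} (t t' : Fin j → F) :
    ∑ v : Fin j → Fin d → F,
        eE ψ E (∑ i, t i • v i) * (starRingEnd ℂ) (eE ψ E (∑ i, t' i • v i))
      = (Fintype.card F : ℂ) ^ (j * d)
          * (((E ×ˢ E).filter fun p => ∀ i, t i • p.1 = t' i • p.2).card : ℂ) := by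
  have hconj : ∀ a : F, (starRingEnd ℂ) (ψ a) = ψ (-a) := fun a => by
    rw [AddChar.starComp_apply hp, AddChar.inv_apply]
  have expand : ∀ v : Fin j → Fin d → F,
      eE ψ E (∑ i, t i • v i) * (starRingEnd ℂ) (eE ψ E (∑ i, t' i • v i))
        = ∑ y ∈ E, ∑ y' ∈ E, ψ (∑ i, ∑ m, v i m * (t i * y m - t' i * y' m)) := by
    intro v
    unfold eE
    rw [map_sum, Finset.sum_mul_sum]
    refine Finset.sum_congr rfl fun y _ => Finset.sum_congr rfl fun y' _ => ?_
    rw [hconj, ← AddChar.map_add_eq_mul]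
    congr 1
    rw [dot_lin, dot_lin, ← sub_eq_add_neg, ← Finset.sum_sub_distrib]
    refine Finset.sum_congr rfl fun i _ => ?_
    unfold dot
    rw [Finset.mul_sum, Finset.mul_sum, ← Finset.sum_sub_distrib]
    exact Finset.sum_congr rfl fun m _ => by ring
  rw [Finset.sum_congr rfl fun v _ => expand v]
  rw [Finset.sum_comm]
  rw [Finset.sum_congr rfl fun y _ => Finset.sum_comm]
  have h2 : ∀ y y' : Fin d → F,
      ∑ v : Fin j → Fin d → F, ψ (∑ i, ∑ m, v i m * (t i * y m - t' i * y' m))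
        = if (∀ i, t i • y = t' i • y') then (Fintype.card F : ℂ) ^ (j * d) else 0 := by
    intro y y'
    rw [psi_sum_vec2 ψ hψ (fun i m => t i * y m - t' i * y' m)]
    refine if_congr ?_ rfl rfl
    constructor
    · intro h i
      funext m
      have h2 := congrFun (congrFun h i) m
      simp only [Pi.zero_apply, sub_eq_zero] at h2
      simpa [smul_eq_mul] using h2
    · intro h
      funext i m
      have h2 := congrFun (h i) m
      simp only [Pi.smul_apply, smul_eq_mul] at h2
      simpa [sub_eq_zero] using h2
  rw [Finset.sum_congr rfl fun y _ => Finset.sum_congr rfl fun y' _ => h2 y y']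
  rw [Finset.card_filter, Finset.sum_product]
  push_cast
  rw [Finset.mul_sum]
  refine Finset.sum_congr rfl fun y _ => ?_
  rw [Finset.mul_sum]
  refine Finset.sum_congr rfl fun y' _ => ?_
  simp only [mul_ite, mul_one, mul_zero]

/-- the big double character-sum count -/
def totalN (E : Finset (Fin d → F)) (j : ℕ) : ℕ :=
  ∑ t ∈ (univ \ {(0 : Fin j → F)}), ∑ t' ∈ (univ \ {(0 : Fin j → F)}),
    ((E ×ˢ E).filter fun p => ∀ i, t i • p.1 = t' i • p.2).card

lemma gsum_L2 (E : Finset (Fin d → F)) (hψ : ψ.IsPrimitive) (hp : 0 < ringChar F) (j : ℕ) :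
    ∑ v : Fin j → Fin d → F, (Complex.normSq (gsum ψ E v) : ℂ)
      = (Fintype.card F : ℂ) ^ (j * d) * (totalN E j : ℂ) := by
  have h1 : ∀ v : Fin j → Fin d → F, (Complex.normSq (gsum ψ E v) : ℂ)
      = ∑ t ∈ (univ \ {(0 : Fin j → F)}), ∑ t' ∈ (univ \ {(0 : Fin j → F)}),
          eE ψ E (∑ i, t i • v i) * (starRingEnd ℂ) (eE ψ E (∑ i, t' i • v i)) := by
    intro v
    rw [← Complex.mul_conj]
    unfold gsum
    rw [map_sum, Finset.sum_mul_sum]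
  rw [Finset.sum_congr rfl fun v _ => h1 v]
  rw [Finset.sum_comm]
  rw [Finset.sum_congr rfl fun t _ => Finset.sum_comm]
  rw [Finset.sum_congr rfl fun t _ => Finset.sum_congr rfl fun t' _ => inner_L2 ψ E hψ hp t t']
  unfold totalN
  push_cast
  rw [Finset.mul_sum]
  exact Finset.sum_congr rfl fun t _ => by rw [Finset.mul_sum]

lemma gsum_L2_real (E : Finset (Fin d → F)) (hψ : ψ.IsPrimitive) (hp : 0 < ringChar F) (j : ℕ) :
    ∑ v : Fin j → Fin d → F, Complex.normSq (gsum ψ E v)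
      = (Fintype.card F : ℝ) ^ (j * d) * (totalN E j : ℝ) := by
  have h := gsum_L2 ψ E hψ hp j
  have h2 : ((∑ v : Fin j → Fin d → F, Complex.normSq (gsum ψ E v) : ℝ) : ℂ)
      = (((Fintype.card F : ℝ) ^ (j * d) * (totalN E j : ℝ) : ℝ) : ℂ) := by
    push_cast
    push_cast at h
    exact h
  exact_mod_cast h2

end Char

lemma htcount_bound {j : ℕ} (y y' : Fin d → F) :
    (((univ \ {(0 : Fin j → F)}) ×ˢ (univ \ {(0 : Fin j → F)})).filter
        fun tt' => ∀ i, tt'.1 i • y = tt'.2 i • y').card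
      ≤ (if y = 0 ∧ y' = 0 then (Fintype.card F) ^ (2 * j) else 0)
        + (if y' ≠ 0 ∧ ∃ c : F, y = c • y' then (Fintype.card F) ^ j else 0) := by
  by_cases hy' : y' = 0
  · by_cases hy : y = 0
    · have hb : (((univ \ {(0 : Fin j → F)}) ×ˢ (univ \ {(0 : Fin j → F)})).filter
            fun tt' => ∀ i, tt'.1 i • y = tt'.2 i • y').card ≤ (Fintype.card F) ^ (2 * j) := by
        calc (((univ \ {(0 : Fin j → F)}) ×ˢ (univ \ {(0 : Fin j → F)})).filter
                fun tt' => ∀ i, tt'.1 i • y = tt'.2 i • y').card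
            ≤ ((univ \ {(0 : Fin j → F)}) ×ˢ (univ \ {(0 : Fin j → F)})).card :=
              Finset.card_filter_le _ _
          _ ≤ ((univ : Finset (Fin j → F)) ×ˢ (univ : Finset (Fin j → F))).card :=
              Finset.card_le_card (Finset.product_subset_product
                Finset.sdiff_subset Finset.sdiff_subset)
          _ = (Fintype.card F) ^ (2 * j) := by
              rw [Finset.card_product, Finset.card_univ, Fintype.card_fun, Fintype.card_fin,
                two_mul, pow_add]
      rw [if_pos ⟨hy, hy'⟩]
      exact le_trans hb (Nat.le_add_right _ _)
    · have hzero : (((univ \ {(0 : Fin j → F)}) ×ˢ (univ \ {(0 : Fin j → F)})).filter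
            fun tt' => ∀ i, tt'.1 i • y = tt'.2 i • y').card = 0 := by
        rw [Finset.card_eq_zero, Finset.filter_eq_empty_iff]
        rintro ⟨t, t'⟩ htt'
        simp only [Finset.mem_product, Finset.mem_sdiff, Finset.mem_univ, true_and,
          Finset.mem_singleton] at htt'
        intro hcond
        apply htt'.1
        funext i
        have h := hcond i
        rw [hy'] at h
        simp only [smul_zero, smul_eq_zero] at h
        rcases h with h | h
        · exact h
        · exact absurd h hy
      rw [hzero]
      exact Nat.zero_le _
  · by_cases hc : ∃ c : F, y = c • y'
    · have hb : (((univ \ {(0 : Fin j → F)}) ×ˢ (univ \ {(0 : Fin j → F)})).filter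
            fun tt' => ∀ i, tt'.1 i • y = tt'.2 i • y').card ≤ (Fintype.card F) ^ j := by
        calc (((univ \ {(0 : Fin j → F)}) ×ˢ (univ \ {(0 : Fin j → F)})).filter
                fun tt' => ∀ i, tt'.1 i • y = tt'.2 i • y').card
            ≤ (univ : Finset (Fin j → F)).card := by
              refine Finset.card_le_card_of_injOn (fun tt' => tt'.1) (fun _ _ => mem_univ _) ?_
              rintro ⟨t1, t1'⟩ h1 ⟨t2, t2'⟩ h2 heq
              simp only [Finset.coe_filter, Set.mem_setOf_eq] at h1 h2
              simp only at heq
              have ht' : t1' = t2' := by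
                funext i
                have e1 := h1.2 i
                have e2 := h2.2 i
                rw [heq] at e1
                have hsub : (t1' i - t2' i) • y' = 0 := by
                  rw [sub_smul, e1.symm.trans e2, sub_self]
                rcases smul_eq_zero.mp hsub with h | h
                · exact sub_eq_zero.mp h
                · exact absurd h hy'
              exact Prod.ext heq ht'
          _ = (Fintype.card F) ^ j := by
              rw [Finset.card_univ, Fintype.card_fun, Fintype.card_fin]
      rw [if_pos (show y' ≠ 0 ∧ ∃ c : F, y = c • y' from ⟨hy', hc⟩)]
      exact le_trans hb (Nat.le_add_left _ _)
    · have hzero : (((univ \ {(0 : Fin j → F)}) ×ˢ (univ \ {(0 : Fin j → F)})).filter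
            fun tt' => ∀ i, tt'.1 i • y = tt'.2 i • y').card = 0 := by
        rw [Finset.card_eq_zero, Finset.filter_eq_empty_iff]
        rintro ⟨t, t'⟩ htt'
        simp only [Finset.mem_product, Finset.mem_sdiff, Finset.mem_univ, true_and,
          Finset.mem_singleton] at htt'
        intro hcond
        obtain ⟨i0, hi0⟩ := Function.ne_iff.mp htt'.1
        simp only [Pi.zero_apply] at hi0
        apply hc
        refine ⟨(t i0)⁻¹ * t' i0, ?_⟩
        have h := hcond i0
        calc y = (t i0)⁻¹ • (t i0 • y) := by rw [smul_smul, inv_mul_cancel₀ hi0, one_smul]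
          _ = (t i0)⁻¹ • (t' i0 • y') := by rw [h]
          _ = ((t i0)⁻¹ * t' i0) • y' := by rw [smul_smul]
      rw [hzero]
      exact Nat.zero_le _

lemma totalN_bound (E : Finset (Fin d → F)) (j : ℕ) :
    totalN E j ≤ (Fintype.card F) ^ (2 * j) + (Fintype.card F) ^ (j + 1) * E.card := by
  have hswap : totalN E j
      = ∑ p ∈ E ×ˢ E,
          (((univ \ {(0 : Fin j → F)}) ×ˢ (univ \ {(0 : Fin j → F)})).filter
            fun tt' => ∀ i, tt'.1 i • p.1 = tt'.2 i • p.2).card := by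
    unfold totalN
    simp only [Finset.card_filter]
    rw [Finset.sum_congr rfl fun t _ => Finset.sum_comm]
    rw [Finset.sum_comm]
    refine Finset.sum_congr rfl fun p _ => ?_
    rw [Finset.sum_product]
  rw [hswap]
  calc ∑ p ∈ E ×ˢ E, (((univ \ {(0 : Fin j → F)}) ×ˢ (univ \ {(0 : Fin j → F)})).filter
            fun tt' => ∀ i, tt'.1 i • p.1 = tt'.2 i • p.2).card
      ≤ ∑ p ∈ E ×ˢ E,
          ((if p.1 = 0 ∧ p.2 = 0 then (Fintype.card F) ^ (2 * j) else 0)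
            + (if p.2 ≠ 0 ∧ ∃ c : F, p.1 = c • p.2 then (Fintype.card F) ^ j else 0)) :=
        Finset.sum_le_sum fun p _ => htcount_bound p.1 p.2
    _ = (∑ p ∈ E ×ˢ E, if p.1 = 0 ∧ p.2 = 0 then (Fintype.card F) ^ (2 * j) else 0)
        + ∑ p ∈ E ×ˢ E, if p.2 ≠ 0 ∧ ∃ c : F, p.1 = c • p.2 then (Fintype.card F) ^ j else 0 :=
        Finset.sum_add_distrib
    _ ≤ (Fintype.card F) ^ (2 * j) + (Fintype.card F) ^ (j + 1) * E.card := by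
        gcongr
        · calc (∑ p ∈ E ×ˢ E, if p.1 = 0 ∧ p.2 = 0 then (Fintype.card F) ^ (2 * j) else 0)
              = ((E ×ˢ E).filter (fun p => p.1 = 0 ∧ p.2 = 0)).card
                  * (Fintype.card F) ^ (2 * j) := by
                rw [← Finset.sum_filter, Finset.sum_const, smul_eq_mul]
            _ ≤ 1 * (Fintype.card F) ^ (2 * j) := by
                gcongr
                rw [Finset.card_le_one]
                rintro a ha b hb
                simp only [Finset.mem_filter] at ha hb
                rw [Prod.ext_iff]
                rw [ha.2.1, ha.2.2, hb.2.1, hb.2.2]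
                exact ⟨rfl, rfl⟩
            _ = (Fintype.card F) ^ (2 * j) := one_mul _
        · calc (∑ p ∈ E ×ˢ E,
                  if p.2 ≠ 0 ∧ ∃ c : F, p.1 = c • p.2 then (Fintype.card F) ^ j else 0)
              = ((E ×ˢ E).filter (fun p => p.2 ≠ 0 ∧ ∃ c : F, p.1 = c • p.2)).card
                  * (Fintype.card F) ^ j := by
                rw [← Finset.sum_filter, Finset.sum_const, smul_eq_mul]
            _ ≤ ((univ : Finset F) ×ˢ E).card * (Fintype.card F) ^ j := by
                gcongr
                refine Finset.card_le_card_of_surjOn (fun cp => (cp.1 • cp.2, cp.2)) ?_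
                rintro ⟨y, y'⟩ hyy'
                simp only [Finset.coe_filter, Set.mem_setOf_eq, Finset.mem_product] at hyy'
                obtain ⟨⟨hyE, hy'E⟩, _, c, hcy⟩ := hyy'
                refine ⟨(c, y'), ?_, ?_⟩
                · simp [hy'E]
                · simp [hcy]
            _ = (Fintype.card F) ^ (j + 1) * E.card := by
                rw [Finset.card_product, Finset.card_univ, pow_succ]
                ring

/-! ### Real-number estimates -/

lemma alpha_mono (jr dr : ℝ) (hj : 1 ≤ jr) (hd : 1 ≤ dr) :
    dr * (jr - 1) / jr + (jr - 1) / 2 + 1 / jr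
      ≤ dr * jr / (jr + 1) + jr / 2 + 1 / (jr + 1) := by
  have hj0 : 0 < jr := by linarith
  have hj1 : 0 < jr + 1 := by linarith
  rw [← sub_nonneg]
  have hexpand : dr * jr / (jr + 1) + jr / 2 + 1 / (jr + 1)
      - (dr * (jr - 1) / jr + (jr - 1) / 2 + 1 / jr)
      = (dr - 1 + jr * (jr + 1) / 2) / (jr * (jr + 1)) := by
    field_simp
    ring
  rw [hexpand]
  apply div_nonneg
  · nlinarith
  · positivity

lemma alpha_ge (jr dr : ℝ) (hj : 1 ≤ jr) (hd : jr * (jr + 1) / 2 + 1 ≤ dr) :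
    jr - 1 ≤ dr * jr / (jr + 1) + jr / 2 + 1 / (jr + 1) := by
  have hj1 : 0 < jr + 1 := by linarith
  rw [← sub_nonneg]
  have hexpand : dr * jr / (jr + 1) + jr / 2 + 1 / (jr + 1) - (jr - 1)
      = (dr * jr + jr * (jr + 1) / 2 + 1 - (jr - 1) * (jr + 1)) / (jr + 1) := by
    field_simp
  rw [hexpand]
  apply div_nonneg _ hj1.le
  nlinarith [sq_nonneg jr, sq_nonneg (jr - 1), sq_nonneg (jr + 1)]

lemma keyineq (j d : ℕ) (q n μ : ℝ) (hq : 2 ≤ q) (hμ0 : 0 < μ) (hμ1 : μ ≤ 1) (hj : 1 ≤ j)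
    (hn : (4 / μ) * q ^ ((d : ℝ) * (j : ℝ) / ((j : ℝ) + 1) + (j : ℝ) / 2 + 1 / ((j : ℝ) + 1))
        ≤ n) :
    Real.sqrt ((2 * (n ^ j * q ^ (-((j : ℝ) * ((j : ℝ) - 1) / 2))))
        * (2 * q ^ (j * d + j + 1) * n))
      ≤ μ * (2 : ℝ) ^ (-(j : ℝ)) * q ^ j
          * (n ^ (j + 1) * q ^ (-(((j : ℝ) + 1) * (j : ℝ) / 2))) := by
  have hq0 : (0 : ℝ) < q := by linarith
  have hjr : (1 : ℝ) ≤ (j : ℝ) := by exact_mod_cast hj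
  have hj1 : (0 : ℝ) < (j : ℝ) + 1 := by linarith
  have hn0 : (0 : ℝ) < n := lt_of_lt_of_le (by positivity) hn
  set α : ℝ := (d : ℝ) * (j : ℝ) / ((j : ℝ) + 1) + (j : ℝ) / 2 + 1 / ((j : ℝ) + 1) with hα
  have hRHS0 : (0 : ℝ) ≤ μ * (2 : ℝ) ^ (-(j : ℝ)) * q ^ j
      * (n ^ (j + 1) * q ^ (-(((j : ℝ) + 1) * (j : ℝ) / 2))) := by positivity
  rw [show μ * (2 : ℝ) ^ (-(j : ℝ)) * q ^ j
        * (n ^ (j + 1) * q ^ (-(((j : ℝ) + 1) * (j : ℝ) / 2)))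
      = Real.sqrt ((μ * (2 : ℝ) ^ (-(j : ℝ)) * q ^ j
        * (n ^ (j + 1) * q ^ (-(((j : ℝ) + 1) * (j : ℝ) / 2)))) ^ 2)
    from (Real.sqrt_sq hRHS0).symm]
  apply Real.sqrt_le_sqrt
  -- lower bound for n ^ (j+1)
  have hpow : ((4 / μ) * q ^ α) ^ (j + 1) ≤ n ^ (j + 1) :=
    pow_le_pow_left₀ (by positivity) hn _
  have hqα : ((4 / μ) * q ^ α) ^ (j + 1) = (4 / μ) ^ (j + 1) * q ^ (α * ((j : ℝ) + 1)) := by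
    rw [mul_pow, ← Real.rpow_natCast (q ^ α) (j + 1), ← Real.rpow_mul hq0.le]
    push_cast
    ring_nf
  have hexp : α * ((j : ℝ) + 1) = (d : ℝ) * (j : ℝ) + (j : ℝ) * ((j : ℝ) + 1) / 2 + 1 := by
    rw [hα]
    field_simp
  -- rewrite both sides
  have hmain : (2 * (n ^ j * q ^ (-((j : ℝ) * ((j : ℝ) - 1) / 2))))
        * (2 * q ^ (j * d + j + 1) * n)
      = 4 * n ^ (j + 1) * q ^ (((j * d + j + 1 : ℕ) : ℝ) - (j : ℝ) * ((j : ℝ) - 1) / 2) := by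
    rw [show ((j * d + j + 1 : ℕ) : ℝ) - (j : ℝ) * ((j : ℝ) - 1) / 2
        = ((j * d + j + 1 : ℕ) : ℝ) + (-((j : ℝ) * ((j : ℝ) - 1) / 2)) by ring]
    rw [Real.rpow_add hq0, Real.rpow_natCast, pow_succ]
    ring
  have hrhs : (μ * (2 : ℝ) ^ (-(j : ℝ)) * q ^ j
        * (n ^ (j + 1) * q ^ (-(((j : ℝ) + 1) * (j : ℝ) / 2)))) ^ 2
      = (μ ^ 2 * ((2 : ℝ) ^ (-(j : ℝ))) ^ 2
          * q ^ (2 * (j : ℝ) - ((j : ℝ) + 1) * (j : ℝ)) * n ^ (j + 1)) * n ^ (j + 1) := by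
    rw [show 2 * (j : ℝ) - ((j : ℝ) + 1) * (j : ℝ)
        = ((j : ℝ) + (-(((j : ℝ) + 1) * (j : ℝ) / 2))) + ((j : ℝ) + (-(((j : ℝ) + 1) * (j : ℝ) / 2)))
        by ring]
    rw [Real.rpow_add hq0, Real.rpow_add hq0, Real.rpow_natCast]
    ring
  rw [hmain, hrhs]
  have hkey : 4 * q ^ (((j * d + j + 1 : ℕ) : ℝ) - (j : ℝ) * ((j : ℝ) - 1) / 2)
      ≤ μ ^ 2 * ((2 : ℝ) ^ (-(j : ℝ))) ^ 2
          * q ^ (2 * (j : ℝ) - ((j : ℝ) + 1) * (j : ℝ)) * n ^ (j + 1) := by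
    have hid : ((j * d + j + 1 : ℕ) : ℝ) - (j : ℝ) * ((j : ℝ) - 1) / 2
        = (2 * (j : ℝ) - ((j : ℝ) + 1) * (j : ℝ)) + α * ((j : ℝ) + 1) := by
      rw [hexp]
      push_cast
      ring
    rw [hid, Real.rpow_add hq0]
    calc 4 * (q ^ (2 * (j : ℝ) - ((j : ℝ) + 1) * (j : ℝ)) * q ^ (α * ((j : ℝ) + 1)))
        ≤ (μ ^ 2 * ((2 : ℝ) ^ (-(j : ℝ))) ^ 2 * (4 / μ) ^ (j + 1))
            * (q ^ (2 * (j : ℝ) - ((j : ℝ) + 1) * (j : ℝ)) * q ^ (α * ((j : ℝ) + 1))) := by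
          have hconst : (4 : ℝ) ≤ μ ^ 2 * ((2 : ℝ) ^ (-(j : ℝ))) ^ 2 * (4 / μ) ^ (j + 1) := by
            have h2pow : ((2 : ℝ) ^ (-(j : ℝ))) ^ 2 * 4 ^ (j + 1) = 4 := by
              rw [show (4 : ℝ) = (2 : ℝ) ^ (2 : ℕ) by norm_num, ← pow_mul,
                ← Real.rpow_natCast ((2 : ℝ) ^ (-(j : ℝ))) 2,
                ← Real.rpow_mul (by norm_num : (0:ℝ) ≤ 2),
                ← Real.rpow_natCast (2 : ℝ) (2 * (j + 1)),
                ← Real.rpow_add (by norm_num : (0:ℝ) < 2),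
                ← Real.rpow_natCast (2 : ℝ) 2]
              congr 1
              push_cast
              ring
            have hμpow : μ ^ (j + 1) ≤ μ ^ 2 :=
              pow_le_pow_of_le_one hμ0.le hμ1 (by omega)
            have hμp0 : (0 : ℝ) < μ ^ (j + 1) := by positivity
            have hdivpow : (4 / μ) ^ (j + 1) = 4 ^ (j + 1) / μ ^ (j + 1) := div_pow _ _ _
            rw [hdivpow]
            rw [show μ ^ 2 * ((2 : ℝ) ^ (-(j : ℝ))) ^ 2 * (4 ^ (j + 1) / μ ^ (j + 1))
                = (((2 : ℝ) ^ (-(j : ℝ))) ^ 2 * 4 ^ (j + 1)) * (μ ^ 2 / μ ^ (j + 1)) by ring]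
            rw [h2pow]
            have : (1 : ℝ) ≤ μ ^ 2 / μ ^ (j + 1) := (one_le_div hμp0).mpr hμpow
            nlinarith
          have hqpos : (0 : ℝ) ≤ q ^ (2 * (j : ℝ) - ((j : ℝ) + 1) * (j : ℝ))
              * q ^ (α * ((j : ℝ) + 1)) := by positivity
          exact mul_le_mul_of_nonneg_right hconst hqpos
      _ = μ ^ 2 * ((2 : ℝ) ^ (-(j : ℝ))) ^ 2 * q ^ (2 * (j : ℝ) - ((j : ℝ) + 1) * (j : ℝ))
            * ((4 / μ) ^ (j + 1) * q ^ (α * ((j : ℝ) + 1))) := by ring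
      _ ≤ μ ^ 2 * ((2 : ℝ) ^ (-(j : ℝ))) ^ 2 * q ^ (2 * (j : ℝ) - ((j : ℝ) + 1) * (j : ℝ))
            * n ^ (j + 1) := by
          refine mul_le_mul_of_nonneg_left ?_ (by positivity)
          rw [← hqα]
          exact hpow
  calc 4 * n ^ (j + 1) * q ^ (((j * d + j + 1 : ℕ) : ℝ) - (j : ℝ) * ((j : ℝ) - 1) / 2)
      = n ^ (j + 1) * (4 * q ^ (((j * d + j + 1 : ℕ) : ℝ) - (j : ℝ) * ((j : ℝ) - 1) / 2)) := by
        ring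
    _ ≤ n ^ (j + 1) * (μ ^ 2 * ((2 : ℝ) ^ (-(j : ℝ))) ^ 2
          * q ^ (2 * (j : ℝ) - ((j : ℝ) + 1) * (j : ℝ)) * n ^ (j + 1)) :=
        mul_le_mul_of_nonneg_left hkey (by positivity)
    _ = (μ ^ 2 * ((2 : ℝ) ^ (-(j : ℝ))) ^ 2
          * q ^ (2 * (j : ℝ) - ((j : ℝ) + 1) * (j : ℝ)) * n ^ (j + 1)) * n ^ (j + 1) := by
        ring

lemma assemble (j d : ℕ) (q n μ lj lj1 A : ℝ)
    (hq2 : 2 ≤ q) (hμ0 : 0 < μ) (hμ1 : μ ≤ 1) (hj : 1 ≤ j)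
    (hn0 : 0 < n) (hlj0 : 0 ≤ lj)
    (hd : (j : ℝ) * ((j : ℝ) + 1) / 2 + 1 ≤ (d : ℝ))
    (hn : (4 / μ) * q ^ ((d : ℝ) * (j : ℝ) / ((j : ℝ) + 1) + (j : ℝ) / 2 + 1 / ((j : ℝ) + 1))
        ≤ n)
    (hG2 : |q ^ j * lj1 - lj * n| ^ 2 ≤ lj * A)
    (hA0 : 0 ≤ A)
    (hA : A ≤ q ^ (j * d) * (q ^ (2 * j) + q ^ (j + 1) * n))
    (hIH : |lj - n ^ j * q ^ (-((j : ℝ) * ((j : ℝ) - 1) / 2))|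
        ≤ μ * (1 - (2 : ℝ) ^ (-((j : ℝ) - 1)))
            * (n ^ j * q ^ (-((j : ℝ) * ((j : ℝ) - 1) / 2)))) :
    |lj1 - n ^ (j + 1) * q ^ (-(((j : ℝ) + 1) * (j : ℝ) / 2))|
      ≤ μ * (1 - (2 : ℝ) ^ (-(j : ℝ)))
          * (n ^ (j + 1) * q ^ (-(((j : ℝ) + 1) * (j : ℝ) / 2))) := by
  have hq0 : (0 : ℝ) < q := by linarith
  have hq1 : (1 : ℝ) < q := by linarith
  have hjr : (1 : ℝ) ≤ (j : ℝ) := by exact_mod_cast hj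
  set Mj : ℝ := n ^ j * q ^ (-((j : ℝ) * ((j : ℝ) - 1) / 2)) with hMjdef
  set Mj1 : ℝ := n ^ (j + 1) * q ^ (-(((j : ℝ) + 1) * (j : ℝ) / 2)) with hMj1def
  have hMj0 : 0 < Mj := by rw [hMjdef]; positivity
  have hMj10 : 0 < Mj1 := by rw [hMj1def]; positivity
  have hpowle : (2 : ℝ) ^ (-((j : ℝ) - 1)) ≤ 1 :=
    Real.rpow_le_one_of_one_le_of_nonpos (by norm_num) (by linarith)
  have hpow0 : (0 : ℝ) < (2 : ℝ) ^ (-((j : ℝ) - 1)) := Real.rpow_pos_of_pos (by norm_num) _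
  have hlj2 : lj ≤ 2 * Mj := by
    have h := (abs_le.mp hIH).2
    have hcle : μ * (1 - (2 : ℝ) ^ (-((j : ℝ) - 1))) ≤ 1 := by
      nlinarith [mul_nonneg (sub_nonneg.mpr hμ1) (sub_nonneg.mpr hpowle)]
    have h2 := mul_le_mul_of_nonneg_right hcle hMj0.le
    linarith
  -- n is at least q ^ (j - 1)
  have hαge : (j : ℝ) - 1
      ≤ (d : ℝ) * (j : ℝ) / ((j : ℝ) + 1) + (j : ℝ) / 2 + 1 / ((j : ℝ) + 1) :=
    alpha_ge _ _ hjr hd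
  have h4μ : (1 : ℝ) ≤ 4 / μ := by
    rw [le_div_iff₀ hμ0]
    linarith
  have hq_exp_le : q ^ ((j : ℝ) - 1) ≤ n := by
    calc q ^ ((j : ℝ) - 1)
        ≤ q ^ ((d : ℝ) * (j : ℝ) / ((j : ℝ) + 1) + (j : ℝ) / 2 + 1 / ((j : ℝ) + 1)) :=
          Real.rpow_le_rpow_of_exponent_le hq1.le hαge
      _ ≤ (4 / μ) * q ^ ((d : ℝ) * (j : ℝ) / ((j : ℝ) + 1) + (j : ℝ) / 2 + 1 / ((j : ℝ) + 1)) := by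
          nlinarith [Real.rpow_pos_of_pos hq0
            ((d : ℝ) * (j : ℝ) / ((j : ℝ) + 1) + (j : ℝ) / 2 + 1 / ((j : ℝ) + 1))]
      _ ≤ n := hn
  have hq2j : (q : ℝ) ^ (2 * j) ≤ q ^ (j + 1) * n := by
    have h1 : (q : ℝ) ^ (2 * j) = q ^ (j + 1) * q ^ (j - 1) := by
      rw [← pow_add]
      congr 1
      omega
    have h2 : (q : ℝ) ^ (j - 1) = q ^ ((j : ℝ) - 1) := by
      rw [← Real.rpow_natCast q (j - 1)]
      congr 1
      rw [Nat.cast_sub hj]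
      norm_num
    rw [h1, h2]
    have := pow_pos hq0 (j + 1)
    nlinarith
  have hA2 : A ≤ 2 * q ^ (j * d + j + 1) * n := by
    calc A ≤ q ^ (j * d) * (q ^ (2 * j) + q ^ (j + 1) * n) := hA
      _ ≤ q ^ (j * d) * (q ^ (j + 1) * n + q ^ (j + 1) * n) := by
          have := pow_pos hq0 (j * d)
          nlinarith
      _ = 2 * q ^ (j * d + j + 1) * n := by
          rw [show j * d + j + 1 = j * d + (j + 1) by omega, pow_add]
          ring
  -- bound the error term
  set G : ℝ := |q ^ j * lj1 - lj * n| with hGdef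
  have hG0 : 0 ≤ G := abs_nonneg _
  have hGb : G ≤ Real.sqrt ((2 * Mj) * (2 * q ^ (j * d + j + 1) * n)) := by
    have h1 : G ^ 2 ≤ (2 * Mj) * (2 * q ^ (j * d + j + 1) * n) := by
      calc G ^ 2 ≤ lj * A := hG2
        _ ≤ (2 * Mj) * (2 * q ^ (j * d + j + 1) * n) := by
            apply mul_le_mul hlj2 hA2 hA0 (by positivity)
    calc G = Real.sqrt (G ^ 2) := (Real.sqrt_sq hG0).symm
      _ ≤ _ := Real.sqrt_le_sqrt h1
  have hkey := keyineq j d q n μ hq2 hμ0 hμ1 hj hn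
  have hGfin : G ≤ μ * (2 : ℝ) ^ (-(j : ℝ)) * q ^ j * Mj1 := le_trans hGb hkey
  -- final computation
  have hqj0 : (0 : ℝ) < q ^ j := by positivity
  have he1 : q ^ j * Mj1 = n * Mj := by
    have hqq : q ^ ((j : ℝ)) * q ^ (-(((j : ℝ) + 1) * (j : ℝ) / 2))
        = q ^ (-((j : ℝ) * ((j : ℝ) - 1) / 2)) := by
      rw [← Real.rpow_add hq0]
      congr 1
      ring
    calc q ^ j * Mj1 = n ^ (j + 1) * (q ^ ((j : ℝ)) * q ^ (-(((j : ℝ) + 1) * (j : ℝ) / 2))) := by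
          rw [hMj1def, ← Real.rpow_natCast q j]
          ring
      _ = n ^ (j + 1) * q ^ (-((j : ℝ) * ((j : ℝ) - 1) / 2)) := by rw [hqq]
      _ = n * Mj := by rw [hMjdef, pow_succ]; ring
  have hsplit : |lj1 - Mj1| ≤ (q ^ j)⁻¹ * (G + n * |lj - Mj|) := by
    have h1 : lj1 - Mj1 = (q ^ j)⁻¹ * ((q ^ j * lj1 - lj * n) + (lj * n - q ^ j * Mj1)) := by
      field_simp
      ring
    rw [h1, abs_mul, abs_inv, abs_of_pos hqj0]
    refine mul_le_mul_of_nonneg_left ?_ (by positivity)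
    calc |(q ^ j * lj1 - lj * n) + (lj * n - q ^ j * Mj1)|
        ≤ |q ^ j * lj1 - lj * n| + |lj * n - q ^ j * Mj1| := abs_add_le _ _
      _ = G + n * |lj - Mj| := by
          congr 1
          rw [he1, show lj * n - n * Mj = n * (lj - Mj) by ring, abs_mul, abs_of_pos hn0]
  have hstep : |lj1 - Mj1|
      ≤ μ * (2 : ℝ) ^ (-(j : ℝ)) * Mj1 + μ * (1 - (2 : ℝ) ^ (-((j : ℝ) - 1))) * Mj1 := by
    have hq_inv_nm : (q ^ j)⁻¹ * (n * Mj) = Mj1 := by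
      rw [← he1]
      field_simp
    calc |lj1 - Mj1| ≤ (q ^ j)⁻¹ * (G + n * |lj - Mj|) := hsplit
      _ ≤ (q ^ j)⁻¹ * ((μ * (2 : ℝ) ^ (-(j : ℝ)) * q ^ j * Mj1)
            + n * (μ * (1 - (2 : ℝ) ^ (-((j : ℝ) - 1))) * Mj)) := by
          refine mul_le_mul_of_nonneg_left ?_ (by positivity)
          refine add_le_add hGfin ?_
          exact mul_le_mul_of_nonneg_left hIH hn0.le
      _ = μ * (2 : ℝ) ^ (-(j : ℝ)) * ((q ^ j)⁻¹ * (q ^ j * Mj1))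
            + μ * (1 - (2 : ℝ) ^ (-((j : ℝ) - 1))) * ((q ^ j)⁻¹ * (n * Mj)) := by
          ring
      _ = μ * (2 : ℝ) ^ (-(j : ℝ)) * Mj1 + μ * (1 - (2 : ℝ) ^ (-((j : ℝ) - 1))) * Mj1 := by
          rw [hq_inv_nm]
          congr 2
          field_simp
  have h2pow : (2 : ℝ) ^ (-((j : ℝ) - 1)) = 2 * (2 : ℝ) ^ (-(j : ℝ)) := by
    rw [show -((j : ℝ) - 1) = 1 + (-(j : ℝ)) by ring, Real.rpow_add (by norm_num),
      Real.rpow_one]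
  calc |lj1 - Mj1|
      ≤ μ * (2 : ℝ) ^ (-(j : ℝ)) * Mj1 + μ * (1 - (2 : ℝ) ^ (-((j : ℝ) - 1))) * Mj1 := hstep
    _ = μ * (1 - (2 : ℝ) ^ (-(j : ℝ))) * Mj1 := by
        rw [h2pow]
        ring

theorem aux (μ : ℝ) (hμ0 : 0 < μ) (hμ1 : μ ≤ 1) :
    ∀ j : ℕ, 1 ≤ j → ∀ (F : Type) [Field F] [Fintype F] [DecidableEq F],
      ∀ (d : ℕ) (E : Finset (Fin d → F)),
      j * (j - 1) / 2 < d →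
      (4 / μ) * (Fintype.card F : ℝ)
          ^ ((d : ℝ) * ((j : ℝ) - 1) / j + ((j : ℝ) - 1) / 2 + 1 / j) ≤ E.card →
      |((tset E j).card : ℝ)
          - (E.card : ℝ) ^ j * (Fintype.card F : ℝ) ^ (-((j : ℝ) * ((j : ℝ) - 1) / 2))|
        ≤ μ * (1 - (2 : ℝ) ^ (-((j : ℝ) - 1)))
            * ((E.card : ℝ) ^ j
                * (Fintype.card F : ℝ) ^ (-((j : ℝ) * ((j : ℝ) - 1) / 2))) := by
  intro j hj
  induction j, hj using Nat.le_induction with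
  | base =>
    intro F _ _ _ d E hd hsize
    rw [tset_one_card]
    simp only [Nat.cast_one]
    rw [show -((1 : ℝ) * ((1 : ℝ) - 1) / 2) = 0 by norm_num, Real.rpow_zero,
      show -((1 : ℝ) - 1) = 0 by norm_num, Real.rpow_zero]
    simp
  | succ j hj IH =>
    intro F _ _ _ d E hd hsize
    have hq2 : (2 : ℝ) ≤ (Fintype.card F : ℝ) := by
      have h := Fintype.one_lt_card (α := F)
      exact_mod_cast h
    have hq0 : (0 : ℝ) < (Fintype.card F : ℝ) := by linarith
    have hjr : (1 : ℝ) ≤ (j : ℝ) := by exact_mod_cast hj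
    -- ℕ-level d bounds
    rw [Nat.add_sub_cancel] at hd
    have hd' : (j + 1) * j / 2 + 1 ≤ d := Nat.succ_le_of_lt hd
    have hdnat : j * (j - 1) / 2 < d :=
      lt_of_le_of_lt (Nat.div_le_div_right (Nat.mul_le_mul (Nat.le_succ j) (Nat.sub_le j 1))) hd
    have hdvd : 2 ∣ (j + 1) * j := by
      rw [mul_comm]
      exact (Nat.even_mul_succ_self j).two_dvd
    have hcast : (((j + 1) * j / 2 : ℕ) : ℝ) = ((j : ℝ) + 1) * (j : ℝ) / 2 := by
      rw [Nat.cast_div hdvd (by norm_num)]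
      push_cast
      ring
    have hdr : (j : ℝ) * ((j : ℝ) + 1) / 2 + 1 ≤ (d : ℝ) := by
      have h2 : (((j + 1) * j / 2 + 1 : ℕ) : ℝ) ≤ (d : ℝ) := by exact_mod_cast hd'
      rw [Nat.cast_add, hcast, Nat.cast_one, mul_comm ((j : ℝ) + 1) (j : ℝ)] at h2
      exact h2
    -- size hypothesis in normalized form
    have hex : (d : ℝ) * (((j + 1 : ℕ) : ℝ) - 1) / ((j + 1 : ℕ) : ℝ)
          + (((j + 1 : ℕ) : ℝ) - 1) / 2 + 1 / ((j + 1 : ℕ) : ℝ)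
        = (d : ℝ) * (j : ℝ) / ((j : ℝ) + 1) + (j : ℝ) / 2 + 1 / ((j : ℝ) + 1) := by
      push_cast
      ring
    rw [hex] at hsize
    have hn0 : (0 : ℝ) < (E.card : ℝ) := by
      refine lt_of_lt_of_le ?_ hsize
      positivity
    -- apply induction hypothesis
    have hd1 : (1 : ℝ) ≤ (d : ℝ) := by nlinarith
    have hsizej : (4 / μ) * (Fintype.card F : ℝ)
        ^ ((d : ℝ) * ((j : ℝ) - 1) / (j : ℝ) + ((j : ℝ) - 1) / 2 + 1 / (j : ℝ))
        ≤ (E.card : ℝ) := by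
      refine le_trans ?_ hsize
      have hmono := alpha_mono (j : ℝ) (d : ℝ) hjr hd1
      have hrle := Real.rpow_le_rpow_of_exponent_le (by linarith : (1 : ℝ) ≤ (Fintype.card F : ℝ)) hmono
      have h40 : (0 : ℝ) ≤ 4 / μ := by positivity
      exact mul_le_mul_of_nonneg_left hrle h40
    have IHres := IH F d E hdnat hsizej
    -- character setup
    have hp : 0 < ringChar F := Nat.pos_of_ne_zero (CharP.ringChar_ne_zero_of_finite F)
    have hψ : (AddChar.FiniteField.primitiveChar_to_Complex F).IsPrimitive :=
      AddChar.FiniteField.primitiveChar_to_Complex_isPrimitive F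
    set ψ : AddChar F ℂ := AddChar.FiniteField.primitiveChar_to_Complex F with hψdef
    -- the L² quantity
    set A : ℝ := ∑ v : Fin j → Fin d → F, Complex.normSq (gsum ψ E v) with hAdef
    have hA0 : 0 ≤ A := Finset.sum_nonneg fun v _ => Complex.normSq_nonneg _
    have hAle : A ≤ (Fintype.card F : ℝ) ^ (j * d)
        * ((Fintype.card F : ℝ) ^ (2 * j) + (Fintype.card F : ℝ) ^ (j + 1) * (E.card : ℝ)) := by
      rw [hAdef, gsum_L2_real ψ E hψ hp j]
      refine mul_le_mul_of_nonneg_left ?_ (by positivity)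
      have h := totalN_bound E j
      have h2 : ((totalN E j : ℕ) : ℝ)
          ≤ (((Fintype.card F) ^ (2 * j) + (Fintype.card F) ^ (j + 1) * E.card : ℕ) : ℝ) := by
        exact_mod_cast h
      push_cast at h2
      exact h2
    -- master equation yields the squared error bound
    have hmaster := master ψ E hψ j
    have hGeq : (((Fintype.card F : ℝ) ^ j * ((tset E (j + 1)).card : ℝ)
          - ((tset E j).card : ℝ) * (E.card : ℝ) : ℝ) : ℂ)
        = ∑ v ∈ tset E j, gsum ψ E v := by
      push_cast
      push_cast at hmaster
      linear_combination hmaster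
    have hG2 : |(Fintype.card F : ℝ) ^ j * ((tset E (j + 1)).card : ℝ)
          - ((tset E j).card : ℝ) * (E.card : ℝ)| ^ 2
        ≤ ((tset E j).card : ℝ) * A := by
      have habs : |(Fintype.card F : ℝ) ^ j * ((tset E (j + 1)).card : ℝ)
            - ((tset E j).card : ℝ) * (E.card : ℝ)|
          = ‖∑ v ∈ tset E j, gsum ψ E v‖ := by
        rw [← hGeq, Complex.norm_real, Real.norm_eq_abs]
      rw [habs]
      have h3 : ‖∑ v ∈ tset E j, gsum ψ E v‖
          ≤ ∑ v ∈ tset E j, ‖gsum ψ E v‖ := norm_sum_le _ _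
      calc (‖∑ v ∈ tset E j, gsum ψ E v‖) ^ 2
          ≤ (∑ v ∈ tset E j, ‖gsum ψ E v‖) ^ 2 := by
            have h0 : 0 ≤ ‖∑ v ∈ tset E j, gsum ψ E v‖ := norm_nonneg _
            exact pow_le_pow_left₀ h0 h3 2
        _ ≤ ((tset E j).card : ℝ) * ∑ v ∈ tset E j, (‖gsum ψ E v‖) ^ 2 :=
            sq_sum_le_card_mul_sum_sq
        _ ≤ ((tset E j).card : ℝ) * A := by
            refine mul_le_mul_of_nonneg_left ?_ (by positivity)
            rw [hAdef]
            have heq : ∑ v ∈ tset E j, (‖gsum ψ E v‖) ^ 2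
                = ∑ v ∈ tset E j, Complex.normSq (gsum ψ E v) :=
              Finset.sum_congr rfl fun v _ => Complex.sq_norm _
            rw [heq]
            exact Finset.sum_le_sum_of_subset_of_nonneg (Finset.subset_univ _)
              fun v _ _ => Complex.normSq_nonneg _
    -- put it together
    have main := assemble j d (Fintype.card F : ℝ) (E.card : ℝ) μ
      ((tset E j).card : ℝ) ((tset E (j + 1)).card : ℝ) A
      hq2 hμ0 hμ1 hj hn0 (Nat.cast_nonneg _) hdr hsize hG2 hA0 hAle IHres
    rw [show (-(((j + 1 : ℕ) : ℝ) * (((j + 1 : ℕ) : ℝ) - 1) / 2))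
        = (-((((j : ℝ)) + 1) * (j : ℝ) / 2)) by push_cast; ring]
    rw [show (-(((j + 1 : ℕ) : ℝ) - 1)) = (-(j : ℝ)) by push_cast; ring]
    exact main

end OrthoProofAux

theorem stmt_0 :
    ∀ ε : ℝ, 0 < ε → ∃ C : ℝ, 0 < C ∧ ∃ Q : ℕ,
      ∀ (F : Type) [Field F] [Fintype F] (d k : ℕ) (E : Finset (Fin d → F)),
        Q ≤ Fintype.card F → 2 ≤ d → 0 < k * (k - 1) / 2 → k * (k - 1) / 2 < d →
        C * (Fintype.card F : ℝ) ^
            ((d : ℝ) * ((k : ℝ) - 1) / k + ((k : ℝ) - 1) / 2 + 1 / k) ≤ E.card →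
        |(orthoTuples E k : ℝ) -
            (E.card : ℝ) ^ k * (Fintype.card F : ℝ) ^ (-(((k : ℝ) * ((k : ℝ) - 1)) / 2))| ≤
          ε * ((E.card : ℝ) ^ k * (Fintype.card F : ℝ) ^ (-(((k : ℝ) * ((k : ℝ) - 1)) / 2))) := by
  intro ε hε
  have hμ0 : 0 < min ε 1 := lt_min hε one_pos
  have hμ1 : min ε 1 ≤ 1 := min_le_right _ _
  refine ⟨4 / min ε 1, by positivity, 0, ?_⟩
  intro F _ _ d k E _ hd2 hk hkd hsize
  letI : DecidableEq F := Classical.decEq F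
  have hk1 : 1 ≤ k := by
    rcases Nat.eq_zero_or_pos k with h | h
    · subst h; simp at hk
    · exact h
  have hres := OrthoProofAux.aux (min ε 1) hμ0 hμ1 k hk1 F d E hkd hsize
  rw [OrthoProofAux.orthoTuples_eq]
  refine le_trans hres ?_
  have hM0 : 0 ≤ (E.card : ℝ) ^ k * (Fintype.card F : ℝ) ^ (-((k : ℝ) * ((k : ℝ) - 1) / 2)) := by
    positivity
  have hpow0 : (0 : ℝ) ≤ (2 : ℝ) ^ (-((k : ℝ) - 1)) :=
    (Real.rpow_pos_of_pos (by norm_num) _).le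
  have h1 : (min ε 1) * (1 - (2 : ℝ) ^ (-((k : ℝ) - 1))) ≤ ε := by
    have h2 : (min ε 1) * (1 - (2 : ℝ) ^ (-((k : ℝ) - 1))) ≤ min ε 1 * 1 := by
      refine mul_le_mul_of_nonneg_left ?_ hμ0.le
      linarith
    have h3 : min ε 1 ≤ ε := min_le_left _ _
    linarith
  exact mul_le_mul_of_nonneg_right h1 hM0
end

section
/- Let q = p^2 with p ≡ 3 (mod 4) a prime power such that (p+1)/4 is an odd integer. Then for every d ≥ 3 there exists a set E ⊆ F_q^d with |E| ≥ c q^{d/2 + 1} for some absolute constant c > 0 such that x · y ≠ 0 for all x, y ∈ E. -/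
open Finset Polynomial

private lemma card_eval_zero_le {F : Type} [Field F] [Fintype F] [DecidableEq F]
    (P : Polynomial F) (hP : P ≠ 0) :
    (univ.filter fun x => P.eval x = 0).card ≤ P.natDegree := by
  have hsub : (univ.filter fun x => P.eval x = 0) ⊆ P.roots.toFinset := by
    intro x hx
    rw [Finset.mem_filter] at hx
    rw [Multiset.mem_toFinset, Polynomial.mem_roots hP]
    exact hx.2
  calc (univ.filter fun x => P.eval x = 0).card
      ≤ P.roots.toFinset.card := Finset.card_le_card hsub
    _ ≤ Multiset.card P.roots := P.roots.toFinset_card_le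
    _ ≤ P.natDegree := P.card_roots'

private lemma card_le_mul_card_pow_image {F : Type} [Field F] [Fintype F] [DecidableEq F]
    (k : ℕ) (hk : 0 < k) (s : Finset F) :
    s.card ≤ k * (s.image (fun x => x ^ k)).card := by
  apply Finset.card_le_mul_card_image
  intro c _
  calc (s.filter fun x => x ^ k = c).card
      ≤ (univ.filter fun x => (X ^ k - C c : Polynomial F).eval x = 0).card := by
        apply Finset.card_le_card
        intro x hx
        rw [Finset.mem_filter] at hx ⊢
        refine ⟨Finset.mem_univ x, ?_⟩
        simp [sub_eq_zero, hx.2]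
    _ ≤ (X ^ k - C c : Polynomial F).natDegree :=
        card_eval_zero_le _ (X_pow_sub_C_ne_zero hk c)
    _ ≤ k := le_of_eq natDegree_X_pow_sub_C

theorem stmt_12 :
    ∃ c : ℝ, 0 < c ∧
      ∀ (p : ℕ), IsPrimePow p → p % 4 = 3 → Odd ((p + 1) / 4) →
      ∀ (F : Type) [Field F] [Fintype F], Fintype.card F = p ^ 2 →
      ∀ d : ℕ, 3 ≤ d →
        ∃ E : Finset (Fin d → F),
          c * (Fintype.card F : ℝ) ^ ((d : ℝ) / 2 + 1) ≤ E.card ∧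
          ∀ x ∈ E, ∀ y ∈ E, ∑ m, x m * y m ≠ 0 := by
  refine ⟨(256:ℝ)⁻¹, by norm_num, ?_⟩
  intro p hpp hp4 _hodd F _inst1 _inst2 hcard d hd
  classical
  obtain ⟨n, rfl⟩ : ∃ n, d = n + 3 := ⟨d - 3, by omega⟩
  have hp2 : 2 ≤ p := hpp.two_le
  obtain ⟨j, hj⟩ : ∃ j, p = 4*j+3 := ⟨p/4, by omega⟩
  set M : ℕ := (4*j+2)*(j+1) with hM
  have hM1 : 1 ≤ M := by
    have : 0 < (4*j+2)*(j+1) := Nat.mul_pos (by omega) (by omega)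
    omega
  have hMeven : Even M := ⟨(2*j+1)*(j+1), by rw [hM]; ring⟩
  have hcard4M : Fintype.card F = 4*M+1 := by rw [hcard, hj, hM]; ring
  have hq1 : Fintype.card F - 1 = 4*M := by omega
  -- characteristic
  set r := ringChar F with hrdef
  haveI hCharP : CharP F r := ringChar.charP F
  have hrprime : r.Prime := CharP.char_is_prime F r
  haveI := Fact.mk hrprime
  obtain ⟨m, hmprime, hm⟩ := FiniteField.card F r
  obtain ⟨s, k, hs, hkpos, hsk⟩ := hpp
  have hsprime : s.Prime := Nat.prime_iff.mpr hs
  have hrs : r = s := by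
    have h1 : r ∣ s ^ (2*k) := by
      have : s ^ (2*k) = r ^ (m:ℕ) := by
        rw [mul_comm, pow_mul, hsk, ← hcard, hm]
      rw [this]
      exact dvd_pow_self r (by exact_mod_cast m.pos.ne')
    exact (Nat.prime_dvd_prime_iff_eq hrprime hsprime).mp
      (hrprime.dvd_of_dvd_pow h1)
  have hp_eq : p = r ^ k := by rw [hrs, hsk]
  have hpodd : p % 2 = 1 := by omega
  have hr2 : r ≠ 2 := by
    intro h2
    have : (2:ℕ) ∣ p := by
      rw [hp_eq, h2]; exact dvd_pow_self 2 (by omega)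
    omega
  have hF2 : (-1 : F) ≠ 1 := by
    intro h
    have h2 : ((2:ℕ) : F) = 0 := by push_cast; linear_combination -h
    have hdvd := (CharP.cast_eq_zero_iff F r 2).mp h2
    have := Nat.le_of_dvd (by norm_num) hdvd
    have := hrprime.two_le
    omega
  have hfrob : ∀ x y : F, (x+y)^p = x^p + y^p := by
    intro x y; rw [hp_eq]; exact add_pow_char_pow x y r k
  have hoddp : Odd p := ⟨2*j+1, by omega⟩
  have hpowcard : ∀ x : F, (x^p)^p = x := by
    intro x
    rw [← pow_mul, show p*p = Fintype.card F by rw [hcard]; ring]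
    exact FiniteField.pow_card x
  -- the subfield (as a finset)
  set S : Finset F := univ.filter (fun x => x ^ p = x) with hSdef
  have hmemS : ∀ x : F, x ∈ S ↔ x ^ p = x := fun x => by simp [hSdef]
  have hS0 : (0:F) ∈ S := by rw [hmemS]; exact zero_pow (by omega)
  have hS1 : (1:F) ∈ S := by rw [hmemS]; exact one_pow p
  have hSadd : ∀ x y : F, x ∈ S → y ∈ S → x + y ∈ S := by
    intro x y hx hy
    rw [hmemS] at hx hy ⊢
    rw [hfrob, hx, hy]
  have hSmul : ∀ x y : F, x ∈ S → y ∈ S → x * y ∈ S := by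
    intro x y hx hy
    rw [hmemS] at hx hy ⊢
    rw [mul_pow, hx, hy]
  have hSM : ∀ x : F, x ∈ S → x ≠ 0 → x ^ M = 1 := by
    intro x hx hx0
    rw [hmemS] at hx
    have hpm : x ^ (p-1) = 1 := by
      have h1 : x ^ (p-1) * x = 1 * x := by
        rw [← pow_succ, show p-1+1 = p by omega, hx, one_mul]
      exact mul_right_cancel₀ hx0 h1
    have hMrw : M = (p-1)*(j+1) := by rw [hM, show p - 1 = 4*j+2 by omega]
    rw [hMrw, pow_mul, hpm, one_pow]
  have hSneg : ∀ z : F, z ∈ S → z^2 = -1 → False := by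
    intro z hz h2
    rw [hmemS] at hz
    have hzp : z ^ p = -z := by
      rw [show p = 2*(2*j+1)+1 by omega, pow_succ, pow_mul, h2,
        show ((-1:F))^(2*j+1) = -1 from Odd.neg_one_pow ⟨j, by ring⟩]
      ring
    have hzz : z = -z := by conv_lhs => rw [← hz, hzp]
    apply hF2
    calc (-1:F) = z^2 := h2.symm
      _ = z * z := sq z
      _ = (-z) * z := by rw [← hzz]
      _ = -(z*z) := by ring
      _ = -(z^2) := by rw [sq]
      _ = -(-1) := by rw [h2]
      _ = 1 := by ring
  -- a nonsquare-type element
  obtain ⟨γ, hγ0, hγM⟩ : ∃ γ : F, γ ≠ 0 ∧ γ ^ (2*M) = -1 := by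
    by_contra hcon
    push_neg at hcon
    have hall : ∀ x : F, x ≠ 0 → x ^ (2*M) = 1 := by
      intro x hx
      have h1 : (x ^ (2*M)) * (x ^ (2*M)) = 1 := by
        rw [← pow_add, show 2*M+2*M = 4*M by ring, ← hq1]
        exact FiniteField.pow_card_sub_one_eq_one x hx
      rcases mul_self_eq_one_iff.mp h1 with h | h
      · exact h
      · exact absurd h (hcon x hx)
    have hsub : univ.erase (0:F) ⊆
        univ.filter (fun x => (X^(2*M) - C 1 : Polynomial F).eval x = 0) := by
      intro x hx
      rw [Finset.mem_erase] at hx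
      rw [Finset.mem_filter]
      refine ⟨Finset.mem_univ x, ?_⟩
      simp [hall x hx.1, sub_eq_zero]
    have h1 : Fintype.card F - 1 ≤ 2*M := by
      calc Fintype.card F - 1 = (univ.erase (0:F)).card := by
            rw [Finset.card_erase_of_mem (Finset.mem_univ 0), Finset.card_univ]
        _ ≤ _ := Finset.card_le_card hsub
        _ ≤ (X^(2*M) - C 1 : Polynomial F).natDegree :=
            card_eval_zero_le _ (X_pow_sub_C_ne_zero (by omega) 1)
        _ = 2*M := natDegree_X_pow_sub_C
    omega
  -- cardinality of S
  have hScard : p ≤ S.card := by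
    set T : Finset F := univ.filter (fun y => y ^ p + y = 0) with hTdef
    have hfT : ∀ x : F, x^p - x ∈ T := by
      intro x
      rw [hTdef, Finset.mem_filter]
      refine ⟨Finset.mem_univ _, ?_⟩
      have hsubpow : (x^p - x)^p = (x^p)^p - x^p := by
        rw [sub_eq_add_neg, hfrob, hoddp.neg_pow]
        ring
      rw [hsubpow, hpowcard x]
      ring
    have hTcard : T.card ≤ p := by
      have hdegle : (X^p + X : Polynomial F).natDegree ≤ p := by
        refine le_trans (natDegree_add_le _ _) ?_
        rw [natDegree_X_pow, natDegree_X, max_le_iff]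
        omega
      have hc : (X^p + X : Polynomial F).coeff p = 1 := by
        rw [coeff_add, coeff_X_pow, if_pos rfl, coeff_X, if_neg (by omega)]
        ring
      have hne : (X^p + X : Polynomial F) ≠ 0 := by
        intro h
        rw [h, coeff_zero] at hc
        exact one_ne_zero hc.symm
      calc T.card ≤ (univ.filter fun x =>
            (X^p + X : Polynomial F).eval x = 0).card := by
            apply Finset.card_le_card
            intro y hy
            rw [hTdef, Finset.mem_filter] at hy
            rw [Finset.mem_filter]
            refine ⟨Finset.mem_univ _, ?_⟩
            simp [hy.2]
        _ ≤ (X^p + X : Polynomial F).natDegree := card_eval_zero_le _ hne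
        _ ≤ p := hdegle
    have hcount : Fintype.card F ≤ T.card * S.card := by
      have h1 : (univ : Finset F).card =
          ∑ y ∈ T, (univ.filter (fun x => x^p - x = y)).card :=
        Finset.card_eq_sum_card_fiberwise (fun x _ => hfT x)
      have h2 : ∀ y ∈ T, (univ.filter (fun x => x^p - x = y)).card ≤ S.card := by
        intro y hy
        rcases Finset.eq_empty_or_nonempty (univ.filter (fun x => x^p - x = y)) with he | hne
        · rw [he]; simp
        · obtain ⟨x₀, hx₀⟩ := hne
          apply Finset.card_le_card_of_injOn (fun x => x - x₀)
          · intro x hx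
            simp only [Finset.mem_coe] at hx ⊢
            rw [Finset.mem_filter] at hx hx₀
            rw [hmemS]
            have hexp : (x - x₀)^p = x^p - x₀^p := by
              rw [sub_eq_add_neg, hfrob, hoddp.neg_pow]
              ring
            rw [hexp]
            linear_combination hx.2 - hx₀.2
          · intro a _ b _ hab
            simpa using hab
      calc Fintype.card F = (univ : Finset F).card := Finset.card_univ.symm
        _ = ∑ y ∈ T, (univ.filter (fun x => x^p - x = y)).card := h1
        _ ≤ ∑ _y ∈ T, S.card := Finset.sum_le_sum h2
        _ = T.card * S.card := by rw [Finset.sum_const, smul_eq_mul]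
    have hfin : p * p ≤ p * S.card := by
      calc p*p = Fintype.card F := by rw [hcard]; ring
        _ ≤ T.card * S.card := hcount
        _ ≤ p * S.card := Nat.mul_le_mul_right _ hTcard
    exact Nat.le_of_mul_le_mul_left hfin (by omega)
  -- image sets
  set A4 : Finset F := (univ.erase (0:F)).image (fun x => x^4) with hA4def
  set SQ : Finset F := (S.erase 0).image (fun x => x^2) with hSQdef
  have hA4mem : ∀ a ∈ A4, a ≠ 0 ∧ a ^ M = 1 := by
    intro a ha
    rw [hA4def, Finset.mem_image] at ha
    obtain ⟨e, he, rfl⟩ := ha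
    rw [Finset.mem_erase] at he
    refine ⟨pow_ne_zero 4 he.1, ?_⟩
    rw [← pow_mul, show 4*M = Fintype.card F - 1 from hq1.symm]
    exact FiniteField.pow_card_sub_one_eq_one e he.1
  have hSQmem : ∀ t ∈ SQ, ∃ u : F, u ∈ S ∧ u ≠ 0 ∧ t = u^2 := by
    intro t ht
    rw [hSQdef, Finset.mem_image] at ht
    obtain ⟨u, hu, rfl⟩ := ht
    rw [Finset.mem_erase] at hu
    exact ⟨u, hu.2, hu.1, rfl⟩
  have hA4card : p^2 - 1 ≤ 4 * A4.card := by
    have h := card_le_mul_card_pow_image 4 (by norm_num) (univ.erase (0:F))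
    rw [Finset.card_erase_of_mem (Finset.mem_univ 0), Finset.card_univ, hcard] at h
    rw [hA4def]
    exact h
  have hSQcard : p - 1 ≤ 2 * SQ.card := by
    have h := card_le_mul_card_pow_image 2 (by norm_num) (S.erase 0)
    rw [Finset.card_erase_of_mem hS0] at h
    rw [hSQdef]
    omega
  -- the vector map and the set E
  set vec : F × F × F × (Fin n → F) → (Fin (n+3) → F) := fun t =>
    Fin.cons (t.1 * t.2.1) (Fin.cons t.1 (Fin.cons (γ * t.2.2.1)
      (fun i => γ * t.2.2.1 * t.2.2.2 i))) with hvecdef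
  set W : Finset (Fin n → F) := Fintype.piFinset (fun _ => S) with hWdef
  set Om : Finset (F × F × F × (Fin n → F)) := A4 ×ˢ SQ ×ˢ A4 ×ˢ W with hOmdef
  set E : Finset (Fin (n+3) → F) := Om.image vec with hEdef
  have hmemOm : ∀ t : F × F × F × (Fin n → F), t ∈ Om ↔
      t.1 ∈ A4 ∧ t.2.1 ∈ SQ ∧ t.2.2.1 ∈ A4 ∧ t.2.2.2 ∈ W := by
    intro t
    rw [hOmdef]
    simp [Finset.mem_product]
  -- the dot product formula
  have hdot : ∀ t t' : F × F × F × (Fin n → F),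
      ∑ m : Fin (n+3), vec t m * vec t' m =
        t.1 * t'.1 * (t.2.1 * t'.2.1 + 1) +
          γ^2 * (t.2.2.1 * t'.2.2.1) * (1 + ∑ i : Fin n, t.2.2.2 i * t'.2.2.2 i) := by
    rintro ⟨a, s, b, w⟩ ⟨a', s', b', w'⟩
    have hmid : ∑ i : Fin n, (γ * b * w i) * (γ * b' * w' i)
        = γ^2 * (b * b') * ∑ i : Fin n, w i * w' i := by
      rw [Finset.mul_sum]
      exact Finset.sum_congr rfl (fun i _ => by ring)
    rw [hvecdef]
    simp only [Fin.sum_univ_succ, Fin.cons_zero, Fin.cons_succ]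
    rw [hmid]
    ring
  refine ⟨E, ?_, ?_⟩
  · -- cardinality bound
    have hb0 : ∀ a ∈ A4, a ≠ 0 := fun a ha => (hA4mem a ha).1
    have hinj : Set.InjOn vec ↑Om := by
      rintro ⟨a, s, b, w⟩ hmem ⟨a', s', b', w'⟩ hmem' heq
      rw [Finset.mem_coe, hmemOm] at hmem hmem'
      have ha0 : a ≠ 0 := hb0 a hmem.1
      have hbb0 : b ≠ 0 := hb0 b hmem.2.2.1
      have h1 : a = a' := by
        have h := congrFun heq (Fin.succ 0)
        simp only [hvecdef, Fin.cons_succ, Fin.cons_zero] at h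
        exact h
      have h2 : γ * b = γ * b' := by
        have h := congrFun heq (Fin.succ (Fin.succ 0))
        simp only [hvecdef, Fin.cons_succ, Fin.cons_zero] at h
        exact h
      have hbeq : b = b' := mul_left_cancel₀ hγ0 h2
      have h0 : a * s = a' * s' := by
        have h := congrFun heq 0
        simp only [hvecdef, Fin.cons_zero] at h
        exact h
      have hseq : s = s' := by
        rw [← h1] at h0
        exact mul_left_cancel₀ ha0 h0
      have hweq : w = w' := by
        funext i
        have h := congrFun heq (Fin.succ (Fin.succ (Fin.succ i)))
        simp only [hvecdef, Fin.cons_succ] at h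
        rw [← hbeq] at h
        exact mul_left_cancel₀ (mul_ne_zero hγ0 hbb0) h
      simp [Prod.ext_iff, h1, hseq, hbeq, hweq]
    have hEcard : E.card = A4.card * (SQ.card * (A4.card * S.card ^ n)) := by
      rw [hEdef, Finset.card_image_of_injOn hinj, hOmdef,
        Finset.card_product, Finset.card_product, Finset.card_product,
        hWdef, Fintype.card_piFinset_const]
    -- real arithmetic
    have hp3 : (3:ℝ) ≤ (p:ℝ) := by exact_mod_cast (by omega : 3 ≤ p)
    have hppos : (0:ℝ) < (p:ℝ) := by linarith
    have hexp : ((Fintype.card F : ℕ) : ℝ) ^ (((n+3 : ℕ) : ℝ)/2 + 1) = (p:ℝ)^(n+5) := by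
      rw [hcard]
      push_cast
      rw [show ((p:ℝ)^(2:ℕ)) = (p:ℝ) ^ ((2:ℕ):ℝ) from (Real.rpow_natCast _ 2).symm,
        ← Real.rpow_mul hppos.le,
        show ((2:ℕ):ℝ) * (((n:ℝ)+3)/2 + 1) = ((n+5 : ℕ):ℝ) by push_cast; ring,
        Real.rpow_natCast]
    rw [hexp, hEcard]
    have hA4R : ((p:ℝ)^2 - 1) ≤ 4*(A4.card:ℝ) := by
      have h1 : ((p^2 - 1 : ℕ):ℝ) ≤ ((4 * A4.card : ℕ):ℝ) := by exact_mod_cast hA4card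
      rw [Nat.cast_sub (Nat.one_le_pow 2 p (by omega))] at h1
      push_cast at h1
      linarith
    have hA4R' : (p:ℝ)^2/8 ≤ (A4.card:ℝ) := by nlinarith
    have hSQR : (p:ℝ)/4 ≤ (SQ.card:ℝ) := by
      have h1 : ((p - 1 : ℕ):ℝ) ≤ ((2 * SQ.card : ℕ):ℝ) := by exact_mod_cast hSQcard
      rw [Nat.cast_sub (by omega)] at h1
      push_cast at h1
      linarith
    have hSR : (p:ℝ)^n ≤ ((S.card:ℝ))^n := by
      apply pow_le_pow_left₀ hppos.le
      exact_mod_cast hScard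
    have hchain : (256:ℝ)⁻¹ * (p:ℝ)^(n+5)
        ≤ (A4.card:ℝ) * ((SQ.card:ℝ) * ((A4.card:ℝ) * (S.card:ℝ)^n)) := by
      have heq : (256:ℝ)⁻¹ * (p:ℝ)^(n+5)
          = ((p:ℝ)^2/8) * (((p:ℝ)/4) * (((p:ℝ)^2/8) * (p:ℝ)^n)) := by
        rw [pow_add]
        ring
      rw [heq]
      have h1 : (0:ℝ) ≤ (p:ℝ)^2/8 := by positivity
      have h2 : (0:ℝ) ≤ (p:ℝ)/4 := by positivity
      have h3 : (0:ℝ) ≤ (p:ℝ)^n := by positivity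
      gcongr
    calc (256:ℝ)⁻¹ * (p:ℝ)^(n+5)
        ≤ (A4.card:ℝ) * ((SQ.card:ℝ) * ((A4.card:ℝ) * (S.card:ℝ)^n)) := hchain
      _ = ((A4.card * (SQ.card * (A4.card * S.card ^ n)) : ℕ) : ℝ) := by push_cast; ring
  · -- no orthogonal pairs
    intro x hx y hy
    rw [hEdef, Finset.mem_image] at hx hy
    obtain ⟨⟨a, s, b, w⟩, hmem, rfl⟩ := hx
    obtain ⟨⟨a', s', b', w'⟩, hmem', rfl⟩ := hy
    rw [hmemOm] at hmem hmem'
    obtain ⟨ha, hs, hb, hw⟩ := hmem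
    obtain ⟨ha', hs', hb', hw'⟩ := hmem'
    rw [hdot]
    simp only
    obtain ⟨ha0, haM⟩ := hA4mem a ha
    obtain ⟨ha0', haM'⟩ := hA4mem a' ha'
    obtain ⟨hb0, hbM⟩ := hA4mem b hb
    obtain ⟨hb0', hbM'⟩ := hA4mem b' hb'
    obtain ⟨u, huS, hu0, rfl⟩ := hSQmem s hs
    obtain ⟨v, hvS, hv0, rfl⟩ := hSQmem s' hs'
    set μ : F := u^2 * v^2 + 1 with hμdef
    have hu2S : u^2 ∈ S := by rw [sq]; exact hSmul u u huS huS
    have hv2S : v^2 ∈ S := by rw [sq]; exact hSmul v v hvS hvS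
    have hμS : μ ∈ S := hSadd _ _ (hSmul _ _ hu2S hv2S) hS1
    have hμ0 : μ ≠ 0 := by
      intro h0
      apply hSneg (u*v) (hSmul _ _ huS hvS)
      have h1 : (u*v)^2 = u^2 * v^2 := by ring
      rw [h1]
      linear_combination h0
    have ht1 : a * a' * μ ≠ 0 := mul_ne_zero (mul_ne_zero ha0 ha0') hμ0
    have ht1M : (a * a' * μ)^M = 1 := by
      rw [mul_pow, mul_pow, haM, haM', hSM μ hμS hμ0]
      ring
    set ν : F := 1 + ∑ i : Fin n, w i * w' i with hνdef
    have hνS : ν ∈ S := by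
      apply hSadd _ _ hS1
      apply Finset.sum_induction _ (· ∈ S) hSadd hS0
      intro i _
      exact hSmul _ _ (Fintype.mem_piFinset.mp hw i) (Fintype.mem_piFinset.mp hw' i)
    intro hzero
    by_cases hν0 : ν = 0
    · rw [hν0, mul_zero, add_zero] at hzero
      exact ht1 hzero
    · have ht2M : (γ^2 * (b * b') * ν)^M = -1 := by
        have hsplit : (γ^2 * (b * b') * ν)^M = γ^(2*M) * (b^M * b'^M) * ν^M := by
          rw [mul_pow, mul_pow, mul_pow, ← pow_mul]
        rw [hsplit, hγM, hbM, hbM', hSM ν hνS hν0]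
        ring
      have h2 : γ^2 * (b * b') * ν = -(a * a' * μ) := by linear_combination hzero
      rw [h2, hMeven.neg_pow, ht1M] at ht2M
      exact hF2 ht2M.symm
end
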